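/- In the polynomial ring ℚ[a, b, c, d], let I be the ideal generated by a, b², b − 2d − 2, and b + c². Then the quotient ring ℚ[a, b, c, d]/I is a finite-dimensional ℚ-vector space of dimension 4. (Hence the configuration (a, b, c, d) = (0, 0, 0, −1) of the Leonardo structure with λ = 2 is a realization of multiplicity 4, i.e. it has a third-order flexion, confirming Tarnai's (2^λ − 1)-order flex for λ = 2.) -/

import Mathlib

open MvPolynomial

namespace LeonardoAux

noncomputable section

abbrev Ileo : Ideal (MvPolynomial (Fin 4) ℚ) :=
  Ideal.span {X 0, (X 1) ^ 2, X 1 - 2 * X 3 - 2, X 1 + (X 2) ^ 2}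

abbrev QA : Type := AdjoinRoot ((Polynomial.X : Polynomial ℚ) ^ 4)

abbrev Qt : Type := MvPolynomial (Fin 4) ℚ ⧸ Ileo

def r : QA := AdjoinRoot.root _

lemma r4 : r ^ 4 = 0 := by
  have h := AdjoinRoot.eval₂_root ((Polynomial.X : Polynomial ℚ) ^ 4)
  simpa [r] using h

def fhom : MvPolynomial (Fin 4) ℚ →ₐ[ℚ] QA :=
  aeval ![0, -r ^ 2, r, -(algebraMap ℚ QA ((1:ℚ)/2) * r ^ 2) - 1]

lemma fhom_X0 : fhom (X 0) = 0 := by simp [fhom]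
lemma fhom_X1 : fhom (X 1) = -r ^ 2 := by simp [fhom]
lemma fhom_X2 : fhom (X 2) = r := by simp [fhom]
lemma fhom_X3 : fhom (X 3) = -(algebraMap ℚ QA ((1:ℚ)/2) * r ^ 2) - 1 := by
  simp [fhom]

lemma two_half : (2 : QA) * algebraMap ℚ QA ((1:ℚ)/2) = 1 := by
  rw [← map_ofNat (algebraMap ℚ QA) 2, ← map_mul]
  norm_num

lemma fhom_vanish : ∀ p ∈ Ileo, fhom p = 0 := by
  intro p hp
  have hle : Ileo ≤ RingHom.ker fhom := by
    rw [Ideal.span_le]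
    rintro q (rfl | rfl | rfl | rfl) <;>
      simp only [SetLike.mem_coe, RingHom.mem_ker, map_sub, map_add, map_mul, map_pow,
        map_ofNat, fhom_X0, fhom_X1, fhom_X2, fhom_X3]
    · rw [show (-r ^ 2) ^ 2 = r ^ 4 from by ring, r4]
    · have h := two_half
      linear_combination r ^ 2 * h
    · ring
  exact hle hp

def fbar : Qt →ₐ[ℚ] QA := Ideal.Quotient.liftₐ Ileo fhom fhom_vanish

lemma fbar_mk (p : MvPolynomial (Fin 4) ℚ) :
    fbar (Ideal.Quotient.mk Ileo p) = fhom p := by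
  simp [fbar, Ideal.Quotient.liftₐ_apply, Ideal.Quotient.lift_mk]
  rfl

lemma c4_mem : ((X 2 : MvPolynomial (Fin 4) ℚ)) ^ 4 ∈ Ileo := by
  have h1 : ((X 1 : MvPolynomial (Fin 4) ℚ)) ^ 2 ∈ Ileo :=
    Ideal.subset_span (by simp)
  have h2 : (X 1 : MvPolynomial (Fin 4) ℚ) + (X 2) ^ 2 ∈ Ileo :=
    Ideal.subset_span (by simp)
  have hE : ((X 2 : MvPolynomial (Fin 4) ℚ)) ^ 4 =
      ((X 2) ^ 2 - X 1) * (X 1 + (X 2) ^ 2) + (X 1) ^ 2 := by ring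
  rw [hE]
  exact Ideal.add_mem _ (Ideal.mul_mem_left _ _ h2) h1

def ghom : QA →ₐ[ℚ] Qt :=
  AdjoinRoot.liftAlgHom _ (Algebra.ofId ℚ Qt) (Ideal.Quotient.mk Ileo (X 2)) (by
    rw [Polynomial.eval₂_X_pow, ← map_pow, Ideal.Quotient.eq_zero_iff_mem]
    exact c4_mem)

lemma ghom_r : ghom r = Ideal.Quotient.mk Ileo (X 2) := by
  simp [ghom, r, AdjoinRoot.liftAlgHom_root]

lemma algebraMap_Qt (q : ℚ) :
    algebraMap ℚ Qt q = Ideal.Quotient.mk Ileo (C q) :=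
  ((Ideal.Quotient.mkₐ ℚ Ileo).commutes q).symm

lemma comp_fg : fbar.comp ghom = AlgHom.id ℚ QA := by
  apply AdjoinRoot.algHom_ext
  simp only [AlgHom.coe_comp, Function.comp_apply, AlgHom.coe_id, id_eq]
  rw [show AdjoinRoot.root ((Polynomial.X : Polynomial ℚ) ^ 4) = r from rfl,
    ghom_r, fbar_mk, fhom_X2]

lemma gf0 : ghom (fhom (X 0)) = Ideal.Quotient.mk Ileo (X 0) := by
  rw [fhom_X0, map_zero, eq_comm, Ideal.Quotient.eq_zero_iff_mem]
  exact Ideal.subset_span (by simp)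

lemma gf1 : ghom (fhom (X 1)) = Ideal.Quotient.mk Ileo (X 1) := by
  rw [fhom_X1, map_neg, map_pow, ghom_r, ← map_pow, ← map_neg,
    Ideal.Quotient.mk_eq_mk_iff_sub_mem]
  have hE : -(X 2 : MvPolynomial (Fin 4) ℚ) ^ 2 - X 1 = -(X 1 + (X 2) ^ 2) := by
    ring
  rw [hE]
  exact neg_mem (Ideal.subset_span (by simp))

lemma gf2 : ghom (fhom (X 2)) = Ideal.Quotient.mk Ileo (X 2) := by
  rw [fhom_X2, ghom_r]

lemma gf3 : ghom (fhom (X 3)) = Ideal.Quotient.mk Ileo (X 3) := by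
  rw [fhom_X3, map_sub, map_neg, map_mul, map_pow, map_one, AlgHom.commutes, ghom_r,
    algebraMap_Qt, ← map_pow, ← map_mul, ← map_neg,
    ← map_one (Ideal.Quotient.mk Ileo), ← map_sub,
    Ideal.Quotient.mk_eq_mk_iff_sub_mem]
  have hC : (C ((1:ℚ)/2) : MvPolynomial (Fin 4) ℚ) * 2 = 1 := by
    rw [← map_ofNat (C : ℚ →+* MvPolynomial (Fin 4) ℚ) 2, ← C_mul]
    norm_num
  have hE : -(C ((1:ℚ)/2) * (X 2 : MvPolynomial (Fin 4) ℚ) ^ 2) - 1 - X 3 =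
      (-(C ((1:ℚ)/2))) * (X 1 + (X 2) ^ 2) +
        (C ((1:ℚ)/2)) * (X 1 - 2 * X 3 - 2) := by
    linear_combination ((X 3 : MvPolynomial (Fin 4) ℚ) + 1) * hC
  rw [hE]
  exact Ideal.add_mem _
    (Ideal.mul_mem_left _ _ (Ideal.subset_span (by simp)))
    (Ideal.mul_mem_left _ _ (Ideal.subset_span (by simp)))

lemma comp_gf : ghom.comp fbar = AlgHom.id ℚ Qt := by
  apply Ideal.Quotient.algHom_ext
  apply MvPolynomial.algHom_ext
  intro i
  fin_cases i
  · exact gf0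
  · exact gf1
  · exact gf2
  · exact gf3

def leoEquiv : Qt ≃ₐ[ℚ] QA := AlgEquiv.ofAlgHom fbar ghom comp_fg comp_gf

lemma X4_ne_zero : ((Polynomial.X : Polynomial ℚ) ^ 4) ≠ 0 :=
  pow_ne_zero _ Polynomial.X_ne_zero

def pb : PowerBasis ℚ QA := AdjoinRoot.powerBasis X4_ne_zero

instance : FiniteDimensional ℚ QA := Module.Finite.of_basis pb.basis

lemma finrank_QA : Module.finrank ℚ QA = 4 := by
  rw [pb.finrank]
  simp [pb, AdjoinRoot.powerBasis]

lemma fd_Qt : FiniteDimensional ℚ Qt :=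
  LinearEquiv.finiteDimensional leoEquiv.symm.toLinearEquiv

lemma finrank_Qt : Module.finrank ℚ Qt = 4 := by
  rw [leoEquiv.toLinearEquiv.finrank_eq, finrank_QA]

end

end LeonardoAux

/-- The Leonardo structure with `λ = 2`: the quotient of `ℚ[a, b, c, d]` by the
primary ideal `⟨a, b², b - 2d - 2, b + c²⟩` supported at the configuration
`(0, 0, 0, -1)` is a `4`-dimensional `ℚ`-vector space, so this configuration is
a realization of multiplicity `4`, i.e. it has a third-order flexion. -/
theorem leonardo_lambda_two_multiplicity_four :
    let a : MvPolynomial (Fin 4) ℚ := X 0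
    let b : MvPolynomial (Fin 4) ℚ := X 1
    let c : MvPolynomial (Fin 4) ℚ := X 2
    let d : MvPolynomial (Fin 4) ℚ := X 3
    let I : Ideal (MvPolynomial (Fin 4) ℚ) :=
      Ideal.span {a, b ^ 2, b - 2 * d - 2, b + c ^ 2}
    FiniteDimensional ℚ (MvPolynomial (Fin 4) ℚ ⧸ I) ∧
      Module.finrank ℚ (MvPolynomial (Fin 4) ℚ ⧸ I) = 4 := by
  exact ⟨LeonardoAux.fd_Qt, LeonardoAux.finrank_Qt⟩
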